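/- arXiv:1806.08045 — 2 statements merged into one kernel-verified Lean document; each statement's English description precedes it below -/
import Mathlib

section
/- Let k be a field and let r, m ≥ 1 be integers. Let f ∈ k[x₁, …, x_r, t] be a nonzero polynomial. Then there exist a nonzero polynomial h ∈ k[x₁, …, x_r] and an integer s₀ ≥ 1, depending only on f, such that for every integer s ≥ s₀, every field extension K of k, and every point g = (g₁, …, g_r) ∈ Kʳ with h(g) ≠ 0, the polynomial f(x₁ + t^{s(m+1)}·g₁, …, x_r + t^{s(m+1)}·g_r, t) ∈ K[x₁, …, x_r, t], regarded as a polynomial in t with coefficients in K[x₁, …, x_r], has leading coefficient equal to a nonzero element of K; equivalently, after multiplication by a unit of K it is monic in t, and in particular it gives an integral dependence relation of t over K[x₁, …, x_r] modulo itself. -/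
/-!
STATEMENT 12: (Paper: Lemma 3.1, lem:monic.) For a nonzero polynomial
`f ∈ k[x₁,…,x_r,t]` there are a nonzero `h ∈ k[x₁,…,x_r]` and `s₀ ≥ 1`, depending
only on `f`, such that for all `s ≥ s₀`, all field extensions `K/k` and all
`g ∈ Kʳ` with `h(g) ≠ 0`, the twisted translate
`f(x₁ + t^{s(m+1)}g₁, …, x_r + t^{s(m+1)}g_r, t)`, viewed as a polynomial in `t`
over `K[x₁,…,x_r]`, has leading coefficient a nonzero constant of `K`.

We model `k[x₁,…,x_r,t]` as `MvPolynomial (Option (Fin r)) k`, the variable `t`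
being `X none`; `optionEquivLeft` views it as a polynomial in `t` over
`K[x₁,…,x_r]`.
-/

universe u

open MvPolynomial

open Polynomial in
theorem coeff_prod_of_natDegree_le'' {R : Type*} [CommSemiring R] {ι : Type*}
    (s : Finset ι) (p : ι → R[X]) (a : ι → ℕ) (h : ∀ i ∈ s, (p i).natDegree ≤ a i) :
    (∏ i ∈ s, p i).natDegree ≤ ∑ i ∈ s, a i ∧
      (∏ i ∈ s, p i).coeff (∑ i ∈ s, a i) = ∏ i ∈ s, (p i).coeff (a i) := by
  classical
  induction s using Finset.induction with
  | empty => simp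
  | @insert x s hx ih =>
    have h' : ∀ i ∈ s, (p i).natDegree ≤ a i := fun i hi => h i (Finset.mem_insert_of_mem hi)
    obtain ⟨ih1, ih2⟩ := ih h'
    rw [Finset.prod_insert hx, Finset.sum_insert hx, Finset.prod_insert hx]
    refine ⟨Polynomial.natDegree_mul_le.trans
      (add_le_add (h x (Finset.mem_insert_self x s)) ih1), ?_⟩
    rw [Polynomial.coeff_mul_add_eq_of_natDegree_le (h x (Finset.mem_insert_self x s)) ih1, ih2]

theorem statement_12 {k : Type u} [Field k] (r m : ℕ) (hr : 1 ≤ r) (hm : 1 ≤ m)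
    (f : MvPolynomial (Option (Fin r)) k) (hf : f ≠ 0) :
    ∃ (h : MvPolynomial (Fin r) k) (s₀ : ℕ), h ≠ 0 ∧ 1 ≤ s₀ ∧
      ∀ s : ℕ, s₀ ≤ s →
        ∀ (K : Type u) [Field K] [Algebra k K], ∀ g : Fin r → K,
          MvPolynomial.aeval g h ≠ 0 →
            ∃ c : K, c ≠ 0 ∧
              (MvPolynomial.optionEquivLeft K (Fin r)
                (MvPolynomial.aeval
                  (fun o : Option (Fin r) =>
                    o.elim (MvPolynomial.X none)
                      (fun i => MvPolynomial.X (some i) +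
                        MvPolynomial.X none ^ (s * (m + 1)) * MvPolynomial.C (g i)))
                  f)).leadingCoeff = MvPolynomial.C c := by
  classical
  set T := f.totalDegree with hT
  set d := f.support.sup (fun μ => ∑ i, μ (some i)) with hd
  set Sd := f.support.filter (fun μ => (∑ i, μ (some i)) = d) with hSd
  set e := Sd.sup (fun μ => μ none) with he
  set S' := Sd.filter (fun μ => μ none = e) with hS'
  have hsupp : f.support.Nonempty := MvPolynomial.support_nonempty.mpr hf
  obtain ⟨μ₀, hμ₀, hμ₀d⟩ := Finset.exists_mem_eq_sup f.support hsupp (fun μ => ∑ i, μ (some i))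
  have hSdne : Sd.Nonempty := ⟨μ₀, Finset.mem_filter.mpr ⟨hμ₀, hμ₀d.symm⟩⟩
  obtain ⟨μ₁, hμ₁, hμ₁e⟩ := Finset.exists_mem_eq_sup Sd hSdne (fun μ => μ none)
  have hμ₁S' : μ₁ ∈ S' := Finset.mem_filter.mpr ⟨hμ₁, hμ₁e.symm⟩
  have hS'supp : ∀ μ ∈ S', μ ∈ f.support := fun μ hμ =>
    (Finset.mem_filter.mp (Finset.mem_filter.mp hμ).1).1
  -- restriction of exponents to the x-variables
  set restr : (Option (Fin r) →₀ ℕ) → (Fin r →₀ ℕ) :=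
    fun μ => Finsupp.equivFunOnFinite.symm (fun i => μ (some i)) with hrestrdef
  have hrestr : ∀ μ i, restr μ i = μ (some i) := fun μ i => rfl
  have hrestr_inj : ∀ μ ∈ S', ∀ ν ∈ S', restr μ = restr ν → μ = ν := by
    intro μ hμ ν hν hrr
    ext o
    cases o with
    | none => rw [(Finset.mem_filter.mp hμ).2, (Finset.mem_filter.mp hν).2]
    | some i =>
      have := congrArg (fun p => p i) hrr
      simpa [hrestr] using this
  set h : MvPolynomial (Fin r) k :=
    ∑ μ ∈ S', MvPolynomial.monomial (restr μ) (f.coeff μ) with hh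
  have hhne : h ≠ 0 := by
    have hc1 : h.coeff (restr μ₁) = f.coeff μ₁ := by
      rw [hh, MvPolynomial.coeff_sum]
      rw [Finset.sum_eq_single μ₁]
      · simp [MvPolynomial.coeff_monomial]
      · intro μ hμ hne
        rw [MvPolynomial.coeff_monomial, if_neg]
        intro hrr
        exact hne (hrestr_inj μ hμ μ₁ hμ₁S' hrr)
      · intro habs; exact absurd hμ₁S' habs
    intro h0
    rw [h0, MvPolynomial.coeff_zero] at hc1
    exact (MvPolynomial.mem_support_iff.mp (hS'supp μ₁ hμ₁S')) hc1.symm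
  refine ⟨h, T + 1, hhne, Nat.le_add_left 1 T, ?_⟩
  intro s hs K _ _ g hg
  set N := s * (m + 1) with hN
  have hNT : T < N := by
    have h1 : s ≤ s * (m + 1) := Nat.le_mul_of_pos_right s (Nat.succ_pos m)
    omega
  have hN0 : 0 < N := lt_of_le_of_lt (Nat.zero_le T) hNT
  refine ⟨MvPolynomial.aeval g h, hg, ?_⟩
  set P : Fin r → Polynomial (MvPolynomial (Fin r) K) :=
    fun i => Polynomial.C (MvPolynomial.X i) +
      Polynomial.C (MvPolynomial.C (g i)) * Polynomial.X ^ N with hP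
  set subst' : Option (Fin r) → Polynomial (MvPolynomial (Fin r) K) :=
    fun o => o.elim Polynomial.X P with hsubst'
  have key : (MvPolynomial.optionEquivLeft K (Fin r))
      (MvPolynomial.aeval
        ((fun o : Option (Fin r) =>
          o.elim (MvPolynomial.X none)
            (fun i => MvPolynomial.X (some i) +
              MvPolynomial.X none ^ N * MvPolynomial.C (g i))) :
          Option (Fin r) → MvPolynomial (Option (Fin r)) K) f)
      = MvPolynomial.aeval subst' f := by
    have hcomp : (((MvPolynomial.optionEquivLeft K (Fin r)).toAlgHom.restrictScalars k).comp
        (MvPolynomial.aeval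
          ((fun o : Option (Fin r) =>
            o.elim (MvPolynomial.X none)
              (fun i => MvPolynomial.X (some i) +
                MvPolynomial.X none ^ N * MvPolynomial.C (g i))) :
            Option (Fin r) → MvPolynomial (Option (Fin r)) K)))
        = MvPolynomial.aeval subst' := by
      apply MvPolynomial.algHom_ext
      intro o
      cases o with
      | none =>
        simp [hsubst', optionEquivLeft_X_none]
      | some i =>
        simp only [AlgHom.coe_comp, AlgHom.coe_restrictScalars', AlgEquiv.toAlgHom_eq_coe,
          AlgHom.coe_coe, Function.comp_apply, MvPolynomial.aeval_X, Option.elim,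
          map_add, map_mul, map_pow, optionEquivLeft_X_some, optionEquivLeft_X_none,
          optionEquivLeft_C, hsubst', hP]
        erw [optionEquivLeft_X_some, optionEquivLeft_X_none, optionEquivLeft_C]
        ring
    exact DFunLike.congr_fun hcomp f
  set w : (Option (Fin r) →₀ ℕ) → ℕ :=
    fun μ => μ none + (∑ i, μ (some i)) * N with hw
  set W : ℕ := e + d * N with hWdef
  set Q : (Option (Fin r) →₀ ℕ) → Polynomial (MvPolynomial (Fin r) K) :=
    fun μ => Polynomial.X ^ (μ none) * ∏ i, (P i) ^ (μ (some i)) with hQdef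
  have hPdeg : ∀ i, (P i).natDegree ≤ N := by
    intro i
    refine (Polynomial.natDegree_add_le _ _).trans (max_le ?_ ?_)
    · simp
    · exact (Polynomial.natDegree_C_mul_le _ _).trans (le_of_eq (Polynomial.natDegree_X_pow N))
  have hPcoeff : ∀ i, (P i).coeff N = MvPolynomial.C (g i) := by
    intro i
    rw [hP]
    simp [Polynomial.coeff_C, hN0.ne', Polynomial.coeff_X_pow]
  have hQ : ∀ μ : Option (Fin r) →₀ ℕ, (Q μ).natDegree ≤ w μ ∧
      (Q μ).coeff (w μ) = MvPolynomial.C (∏ i, g i ^ μ (some i)) := by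
    intro μ
    have hpow : ∀ i : Fin r, ((P i) ^ (μ (some i))).natDegree ≤ μ (some i) * N :=
      fun i => Polynomial.natDegree_pow_le_of_le _ (hPdeg i)
    obtain ⟨h1, h2⟩ := coeff_prod_of_natDegree_le'' Finset.univ
      (fun i => (P i) ^ (μ (some i))) (fun i => μ (some i) * N) (fun i _ => hpow i)
    have hsum : (∑ i, μ (some i) * N) = (∑ i, μ (some i)) * N := by rw [Finset.sum_mul]
    rw [hsum] at h1 h2
    constructor
    · exact Polynomial.natDegree_mul_le.trans
        (add_le_add (le_of_eq (Polynomial.natDegree_X_pow _)) h1)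
    · rw [hQdef, hw]
      simp only []
      rw [Polynomial.coeff_mul_add_eq_of_natDegree_le (le_of_eq (Polynomial.natDegree_X_pow _)) h1,
        Polynomial.coeff_X_pow, if_pos rfl, one_mul, h2]
      calc ∏ i, (P i ^ μ (some i)).coeff (μ (some i) * N)
          = ∏ i, MvPolynomial.C (g i ^ μ (some i)) :=
            Finset.prod_congr rfl fun i _ => by
              rw [Polynomial.coeff_pow_of_natDegree_le (hPdeg i), hPcoeff i, ← map_pow]
        _ = _ := (map_prod _ _ _).symm
  -- the expansion of the substituted polynomial
  have hF : (MvPolynomial.aeval subst' f : Polynomial (MvPolynomial (Fin r) K))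
      = ∑ μ ∈ f.support,
          Polynomial.C (MvPolynomial.C (algebraMap k K (f.coeff μ))) * Q μ := by
    conv_lhs => rw [f.as_sum]
    rw [map_sum]
    refine Finset.sum_congr rfl fun μ _ => ?_
    rw [MvPolynomial.aeval_monomial, Finsupp.prod_fintype _ _ (fun o => pow_zero _),
      Fintype.prod_option]
    rfl
  -- bound on t-degrees of monomials, with strictness off the leading set
  have hμnone : ∀ μ ∈ f.support, μ none ≤ T := by
    intro μ hμ
    have h1 := MvPolynomial.le_totalDegree hμ
    refine le_trans ?_ h1
    by_cases h0 : μ none = 0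
    · simp [h0]
    · exact Finset.single_le_sum (f := fun a => μ a) (fun _ _ => Nat.zero_le _)
        (Finsupp.mem_support_iff.mpr h0)
  have hwle : ∀ μ ∈ f.support, w μ ≤ W ∧ (μ ∉ S' → w μ < W) := by
    intro μ hμ
    have ha : (∑ i, μ (some i)) ≤ d := Finset.le_sup (f := fun μ => ∑ i, μ (some i)) hμ
    rcases eq_or_lt_of_le ha with haeq | halt
    · have hμSd : μ ∈ Sd := Finset.mem_filter.mpr ⟨hμ, haeq⟩
      have he' : μ none ≤ e := Finset.le_sup (f := fun μ => μ none) hμSd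
      constructor
      · rw [hw, hWdef]; simp only []; rw [haeq]; omega
      · intro hμS
        have hne : μ none ≠ e := fun habs => hμS (Finset.mem_filter.mpr ⟨hμSd, habs⟩)
        rw [hw, hWdef]; simp only []; rw [haeq]
        have : μ none < e := lt_of_le_of_ne he' hne
        omega
    · have h1 : ((∑ i, μ (some i)) + 1) * N ≤ d * N := Nat.mul_le_mul_right N halt
      have h2 : μ none < N := lt_of_le_of_lt (hμnone μ hμ) hNT
      have h3 : w μ < W := by
        rw [hw, hWdef]; simp only []
        calc μ none + (∑ i, μ (some i)) * N < N + (∑ i, μ (some i)) * N := by omega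
          _ = ((∑ i, μ (some i)) + 1) * N := by ring
          _ ≤ d * N := h1
          _ ≤ e + d * N := Nat.le_add_left _ _
      exact ⟨le_of_lt h3, fun _ => h3⟩
  -- the coefficient in degree W
  have hcoeff : (MvPolynomial.aeval subst' f : Polynomial (MvPolynomial (Fin r) K)).coeff W
      = MvPolynomial.C (MvPolynomial.aeval g h) := by
    rw [hF, Polynomial.finset_sum_coeff]
    have step1 : ∀ μ ∈ f.support,
        (Polynomial.C (MvPolynomial.C (algebraMap k K (f.coeff μ))) * Q μ).coeff W
          = if μ ∈ S' then
              MvPolynomial.C (algebraMap k K (f.coeff μ) * ∏ i, g i ^ μ (some i)) else 0 := by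
      intro μ hμ
      rw [Polynomial.coeff_C_mul]
      by_cases hμS : μ ∈ S'
      · have hwW : w μ = W := by
          have h1 := (Finset.mem_filter.mp hμS).2
          have h2 := (Finset.mem_filter.mp (Finset.mem_filter.mp hμS).1).2
          rw [hw, hWdef]; simp only []; rw [h1, h2]
        rw [if_pos hμS, ← hwW, (hQ μ).2, ← map_mul]
      · rw [if_neg hμS, Polynomial.coeff_eq_zero_of_natDegree_lt
          (lt_of_le_of_lt (hQ μ).1 ((hwle μ hμ).2 hμS)), mul_zero]
    rw [Finset.sum_congr rfl step1, ← Finset.sum_filter]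
    have hfilt : f.support.filter (· ∈ S') = S' := by
      ext μ
      simp only [Finset.mem_filter, and_iff_right_iff_imp]
      exact fun hμ => hS'supp μ hμ
    rw [hfilt, ← map_sum MvPolynomial.C]
    congr 1
    rw [hh, map_sum]
    refine Finset.sum_congr rfl fun μ hμ => ?_
    rw [MvPolynomial.aeval_monomial, Finsupp.prod_fintype _ _ (fun i => pow_zero _)]
    rfl
  -- degree bound for the whole polynomial
  have hFdeg : (MvPolynomial.aeval subst' f : Polynomial (MvPolynomial (Fin r) K)).natDegree ≤ W := by
    rw [hF]
    refine Polynomial.natDegree_sum_le_of_forall_le _ _ fun μ hμ => ?_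
    exact (Polynomial.natDegree_C_mul_le _ _).trans ((hQ μ).1.trans (hwle μ hμ).1)
  have hCne : MvPolynomial.C (MvPolynomial.aeval g h) ≠ (0 : MvPolynomial (Fin r) K) :=
    fun h0 => hg (MvPolynomial.C_injective (Fin r) K (by rw [h0, map_zero]))
  have hW : (MvPolynomial.aeval subst' f : Polynomial (MvPolynomial (Fin r) K)).natDegree = W :=
    Polynomial.natDegree_eq_of_le_of_coeff_ne_zero hFdeg (by rw [hcoeff]; exact hCne)
  rw [key, Polynomial.leadingCoeff, hW, hcoeff]
end

section
/- Let k be a field and let r, m ≥ 1 be integers. Let f ∈ k[x₁, …, x_r, t] be an irreducible polynomial such that the ideal (f, t) is the unit ideal of k[x₁, …, x_r, t] (equivalently, the hypersurface {f = 0} in 𝔸^{r+1}_k is disjoint from the divisor {t = 0}). Then there exist a nonzero polynomial h ∈ k[x₁, …, x_r] and an integer s₀ ≥ 1 such that for every s ≥ s₀, every field extension K of k, and every g = (g₁, …, g_r) ∈ Kʳ with h(g) ≠ 0, setting f_g := f(x₁ + t^{s(m+1)}·g₁, …, x_r + t^{s(m+1)}·g_r, t), the natural K-algebra homomorphism K[x₁,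 …, x_r] → K[x₁, …, x_r, t]/(f_g) is injective and finite (the target is a finitely generated module over the source); consequently the projection of the hypersurface {f_g = 0} ⊆ 𝔸^{r+1}_K to 𝔸ʳ_K is a finite surjective morphism. -/
/-!
STATEMENT 13: (Paper: algebraic content of Lemma 3.4, lem:sfs-Ar-1.) Let
`f ∈ k[x₁,…,x_r,t]` be irreducible with `(f, t) = (1)`. Then there are a nonzero
`h ∈ k[x₁,…,x_r]` and `s₀ ≥ 1` such that for all `s ≥ s₀`, all field extensions
`K/k` and all `g ∈ Kʳ` with `h(g) ≠ 0`, setting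
`f_g := f(x₁ + t^{s(m+1)}g₁, …, x_r + t^{s(m+1)}g_r, t)`, the natural map
`K[x₁,…,x_r] → K[x₁,…,x_r,t]/(f_g)` is injective and finite.

We model `k[x₁,…,x_r,t]` as `MvPolynomial (Option (Fin r)) k`, with `t = X none`;
the inclusion `K[x₁,…,x_r] → K[x₁,…,x_r,t]` is `rename some`.
-/

universe u

open MvPolynomial

namespace Statement13Aux

open Polynomial


lemma coeff_prod_le {ι A : Type*} [CommSemiring A] (s : Finset ι)
    (p : ι → A[X]) (n : ι → ℕ) (h : ∀ i ∈ s, (p i).natDegree ≤ n i) :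
    (∏ i ∈ s, p i).coeff (∑ i ∈ s, n i) = ∏ i ∈ s, (p i).coeff (n i) := by
  induction s using Finset.cons_induction with
  | empty => simp
  | cons a s ha ih =>
    rw [Finset.prod_cons, Finset.sum_cons,
      Polynomial.coeff_mul_add_eq_of_natDegree_le (h a (Finset.mem_cons_self a s))
        ((Polynomial.natDegree_prod_le _ _).trans
          (Finset.sum_le_sum fun i hi => h i (Finset.mem_cons_of_mem hi))),
      ih fun i hi => h i (Finset.mem_cons_of_mem hi), Finset.prod_cons]

lemma eq_C_of_totalDegree_eq_zero {σ : Type*} {R : Type*} [CommSemiring R]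
    {p : MvPolynomial σ R} (h : p.totalDegree = 0) :
    p = MvPolynomial.C (MvPolynomial.coeff 0 p) := by
  classical
  ext a
  rw [MvPolynomial.coeff_C]
  by_cases ha : (0 : σ →₀ ℕ) = a
  · subst ha; simp
  · rw [if_neg ha]
    by_contra hne
    exact ha (Finsupp.ext fun i =>
      ((MvPolynomial.totalDegree_eq_zero_iff σ p).mp h a
        (MvPolynomial.mem_support_iff.mpr hne) i).symm)

lemma finite_algebraMap {R S : Type u} [CommRing R] [CommRing S] [Algebra R S]
    (h : Module.Finite R S) : (algebraMap R S).Finite := by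
  have e : (algebraMap R S).toAlgebra = ‹Algebra R S› :=
    Algebra.algebra_ext _ _ fun r => by rw [RingHom.algebraMap_toAlgebra]
  show @Module.Finite R S _ _ (@Algebra.toModule _ _ _ _ ((algebraMap R S).toAlgebra))
  rw [e]
  exact h

variable {k : Type u} [Field k] {K : Type u} [Field K] [Algebra k K] {r : ℕ}

noncomputable def uu (g : Fin r → K) (N : ℕ) (i : Fin r) :
    Polynomial (MvPolynomial (Fin r) K) :=
  Polynomial.C (MvPolynomial.X i) +
    Polynomial.X ^ N * Polynomial.C (MvPolynomial.C (g i))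

noncomputable def psi (k : Type u) [Field k] [Algebra k K] (g : Fin r → K) (N : ℕ) :
    MvPolynomial (Fin r) k →ₐ[k] Polynomial (MvPolynomial (Fin r) K) :=
  aeval (uu g N)

lemma natDegree_uu (g : Fin r → K) (N : ℕ) (i : Fin r) : (uu g N i).natDegree ≤ N := by
  refine (Polynomial.natDegree_add_le _ _).trans (max_le (by simp) ?_)
  exact Polynomial.natDegree_mul_le.trans (by simp)

lemma coeff_uu (g : Fin r → K) (N : ℕ) (hN : 1 ≤ N) (i : Fin r) :
    (uu g N i).coeff N = MvPolynomial.C (g i) := by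
  have hN0 : N ≠ 0 := by omega
  rw [uu, Polynomial.coeff_add, mul_comm (Polynomial.X ^ N), Polynomial.coeff_C_mul,
    Polynomial.coeff_C, if_neg hN0, Polynomial.coeff_X_pow, if_pos rfl, zero_add, mul_one]

lemma algMap_poly (c : k) : algebraMap k (Polynomial (MvPolynomial (Fin r) K)) c
    = Polynomial.C (MvPolynomial.C (algebraMap k K c)) := by
  rw [Polynomial.algebraMap_apply, MvPolynomial.algebraMap_apply]

lemma psi_monomial (g : Fin r → K) (N : ℕ) (a : Fin r →₀ ℕ) (c : k) :
    (psi k g N) (monomial a c)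
      = Polynomial.C (MvPolynomial.C (algebraMap k K c)) *
          ∏ i ∈ a.support, uu g N i ^ a i := by
  rw [psi, MvPolynomial.aeval_monomial, algMap_poly]
  rfl

lemma natDegree_psi_monomial (g : Fin r → K) (N : ℕ) (a : Fin r →₀ ℕ) (c : k) :
    ((psi k g N) (monomial a c)).natDegree ≤ N * (a.sum fun _ e => e) := by
  rw [psi_monomial]
  refine Polynomial.natDegree_mul_le.trans ?_
  rw [Polynomial.natDegree_C, zero_add]
  refine (Polynomial.natDegree_prod_le _ _).trans ?_
  refine le_trans (Finset.sum_le_sum fun i _ =>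
    (Polynomial.natDegree_pow_le).trans (Nat.mul_le_mul_left _ (natDegree_uu g N i))) ?_
  rw [← Finset.sum_mul, Finsupp.sum, mul_comm]

lemma coeff_psi_monomial (g : Fin r → K) (N : ℕ) (hN : 1 ≤ N) (a : Fin r →₀ ℕ) (c : k) :
    ((psi k g N) (monomial a c)).coeff (N * (a.sum fun _ e => e))
      = MvPolynomial.C ((MvPolynomial.aeval g) (monomial a c)) := by
  have hdeg : ∀ i ∈ a.support, (uu g N i ^ a i).natDegree ≤ a i * N :=
    fun i _ => Polynomial.natDegree_pow_le.trans (Nat.mul_le_mul_left _ (natDegree_uu g N i))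
  have hsum : N * (a.sum fun _ e => e) = 0 + ∑ i ∈ a.support, a i * N := by
    rw [zero_add, ← Finset.sum_mul, Finsupp.sum, mul_comm]
  rw [psi_monomial, hsum,
    Polynomial.coeff_mul_add_eq_of_natDegree_le (by simp)
      ((Polynomial.natDegree_prod_le _ _).trans (Finset.sum_le_sum hdeg)),
    coeff_prod_le _ _ _ hdeg]
  have hc : ∀ i ∈ a.support, (uu g N i ^ a i).coeff (a i * N) = MvPolynomial.C (g i ^ a i) := by
    intro i _
    rw [Polynomial.coeff_pow_of_natDegree_le (natDegree_uu g N i), coeff_uu g N hN, ← map_pow]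
  rw [Finset.prod_congr rfl hc, Polynomial.coeff_C_zero, MvPolynomial.aeval_monomial, map_mul, ← map_prod]
  rfl

lemma natDegree_psi_le (g : Fin r → K) (N : ℕ) (p : MvPolynomial (Fin r) k) :
    ((psi k g N) p).natDegree ≤ N * p.totalDegree := by
  conv_lhs => rw [← support_sum_monomial_coeff p]
  rw [map_sum]
  refine Polynomial.natDegree_sum_le_of_forall_le _ _ fun a ha => ?_
  exact (natDegree_psi_monomial g N a _).trans (Nat.mul_le_mul_left _ (le_totalDegree ha))

lemma coeff_psi (g : Fin r → K) (N : ℕ) (hN : 1 ≤ N) (p : MvPolynomial (Fin r) k) (e : ℕ)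
    (he : p.totalDegree ≤ e) :
    ((psi k g N) p).coeff (N * e)
      = MvPolynomial.C ((MvPolynomial.aeval g) (homogeneousComponent e p)) := by
  conv_lhs => rw [← support_sum_monomial_coeff p]
  rw [map_sum, Polynomial.finset_sum_coeff, homogeneousComponent_apply, map_sum, map_sum,
    Finset.sum_filter]
  refine Finset.sum_congr rfl fun a ha => ?_
  by_cases hd : (a.sum fun _ e => e) = e
  · rw [if_pos (by simpa [Finsupp.degree_apply, Finsupp.sum] using hd), ← hd,
      coeff_psi_monomial g N hN]
  · rw [if_neg (by simpa [Finsupp.degree_apply, Finsupp.sum] using hd)]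
    refine Polynomial.coeff_eq_zero_of_natDegree_lt ?_
    refine lt_of_le_of_lt (natDegree_psi_monomial g N a _) ?_
    have h1 : (a.sum fun _ e => e) < e :=
      lt_of_le_of_ne (le_trans (le_totalDegree ha) he) hd
    exact mul_lt_mul_of_pos_left h1 (by omega)

lemma lambda_eq (g : Fin r → K) (N : ℕ) (f : MvPolynomial (Option (Fin r)) k) :
    (optionEquivLeft K (Fin r))
        ((MvPolynomial.aeval (fun o : Option (Fin r) =>
            o.elim (MvPolynomial.X none)
              (fun i => MvPolynomial.X (some i) +
                MvPolynomial.X none ^ N * MvPolynomial.C (g i)))) f)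
      = ∑ j ∈ (optionEquivLeft k (Fin r) f).support,
          (psi k g N) ((optionEquivLeft k (Fin r) f).coeff j) * Polynomial.X ^ j := by
  set σf : Option (Fin r) → MvPolynomial (Option (Fin r)) K := fun o =>
    o.elim (MvPolynomial.X none)
      (fun i => MvPolynomial.X (some i) +
        MvPolynomial.X none ^ N * MvPolynomial.C (g i)) with hσf
  set Φ : Polynomial (MvPolynomial (Fin r) k) →+* Polynomial (MvPolynomial (Fin r) K) :=
    Polynomial.eval₂RingHom (psi k g N).toRingHom Polynomial.X with hΦ
  have key : ((optionEquivLeft K (Fin r)).toAlgHom.toRingHom).comp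
        (MvPolynomial.aeval σf).toRingHom
      = Φ.comp ((optionEquivLeft k (Fin r)).toAlgHom.toRingHom) := by
    apply MvPolynomial.ringHom_ext
    · intro c
      simp only [RingHom.coe_comp, Function.comp_apply, AlgHom.toRingHom_eq_coe,
        RingHom.coe_coe, AlgHom.coe_coe, AlgEquiv.coe_algHom]
      rw [MvPolynomial.aeval_C, MvPolynomial.algebraMap_apply, optionEquivLeft_C,
        optionEquivLeft_C, hΦ, Polynomial.coe_eval₂RingHom, Polynomial.eval₂_C]
      show Polynomial.C (MvPolynomial.C (algebraMap k K c)) = (psi k g N) (MvPolynomial.C c)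
      rw [psi, MvPolynomial.aeval_C, algMap_poly]
    · intro o
      simp only [RingHom.coe_comp, Function.comp_apply, AlgHom.toRingHom_eq_coe,
        RingHom.coe_coe, AlgHom.coe_coe, AlgEquiv.coe_algHom]
      rw [MvPolynomial.aeval_X]
      cases o with
      | none =>
        rw [hσf]
        show (optionEquivLeft K (Fin r)) (MvPolynomial.X none)
          = Φ ((optionEquivLeft k (Fin r)) (MvPolynomial.X none))
        rw [optionEquivLeft_X_none, optionEquivLeft_X_none, hΦ,
          Polynomial.coe_eval₂RingHom, Polynomial.eval₂_X]
      | some i =>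
        show (optionEquivLeft K (Fin r)) (σf (some i))
          = Φ ((optionEquivLeft k (Fin r)) (MvPolynomial.X (some i)))
        rw [optionEquivLeft_X_some, hΦ, Polynomial.coe_eval₂RingHom, Polynomial.eval₂_C]
        rw [hσf]
        show (optionEquivLeft K (Fin r))
            (MvPolynomial.X (some i) + MvPolynomial.X none ^ N * MvPolynomial.C (g i))
          = (psi k g N) (MvPolynomial.X i)
        rw [map_add, map_mul, map_pow, optionEquivLeft_X_some, optionEquivLeft_X_none,
          optionEquivLeft_C, psi, MvPolynomial.aeval_X, uu]
  have hf := RingHom.congr_fun key f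
  simp only [RingHom.coe_comp, Function.comp_apply, AlgHom.toRingHom_eq_coe,
    RingHom.coe_coe, AlgHom.coe_coe, AlgEquiv.coe_algHom] at hf
  rw [hf, hΦ, Polynomial.coe_eval₂RingHom, Polynomial.eval₂_eq_sum, Polynomial.sum_def]
  rfl

end Statement13Aux

set_option maxHeartbeats 1000000 in
open Statement13Aux Polynomial in
theorem statement_13 {k : Type u} [Field k] (r m : ℕ) (hr : 1 ≤ r) (hm : 1 ≤ m)
    (f : MvPolynomial (Option (Fin r)) k) (hirr : Irreducible f)
    (hft : Ideal.span ({f, MvPolynomial.X none} : Set (MvPolynomial (Option (Fin r)) k)) = ⊤) :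
    ∃ (h : MvPolynomial (Fin r) k) (s₀ : ℕ), h ≠ 0 ∧ 1 ≤ s₀ ∧
      ∀ s : ℕ, s₀ ≤ s →
        ∀ (K : Type u) [Field K] [Algebra k K], ∀ g : Fin r → K,
          MvPolynomial.aeval g h ≠ 0 →
            Function.Injective
              ((Ideal.Quotient.mk (Ideal.span
                  ({MvPolynomial.aeval
                      (fun o : Option (Fin r) =>
                        o.elim (MvPolynomial.X none)
                          (fun i => MvPolynomial.X (some i) +
                            MvPolynomial.X none ^ (s * (m + 1)) * MvPolynomial.C (g i)))
                      f} : Set (MvPolynomial (Option (Fin r)) K)))).comp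
                (MvPolynomial.rename (some : Fin r → Option (Fin r))).toRingHom) ∧
            RingHom.Finite
              ((Ideal.Quotient.mk (Ideal.span
                  ({MvPolynomial.aeval
                      (fun o : Option (Fin r) =>
                        o.elim (MvPolynomial.X none)
                          (fun i => MvPolynomial.X (some i) +
                            MvPolynomial.X none ^ (s * (m + 1)) * MvPolynomial.C (g i)))
                      f} : Set (MvPolynomial (Option (Fin r)) K)))).comp
                (MvPolynomial.rename (some : Fin r → Option (Fin r))).toRingHom) := by
  classical
  have hf0 : f ≠ 0 := hirr.ne_zero
  set F : Polynomial (MvPolynomial (Fin r) k) := optionEquivLeft k (Fin r) f with hF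
  have hF0 : F ≠ 0 := by
    intro h0
    exact hf0 ((optionEquivLeft k (Fin r)).injective (by rw [← hF, h0, map_zero]))
  have hsupp : F.support.Nonempty := Polynomial.support_nonempty.mpr hF0
  set d : ℕ := F.support.sup (fun j => (F.coeff j).totalDegree) with hd
  set S : Finset ℕ := F.support.filter (fun j => (F.coeff j).totalDegree = d) with hS
  have hSne : S.Nonempty := by
    obtain ⟨j, hj, hje⟩ :=
      Finset.exists_mem_eq_sup F.support hsupp (fun j => (F.coeff j).totalDegree)
    exact ⟨j, Finset.mem_filter.mpr ⟨hj, hje.symm⟩⟩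
  set jstar : ℕ := S.max' hSne with hjstar
  have hjstarS : jstar ∈ S := S.max'_mem hSne
  have hjstar_supp : jstar ∈ F.support := (Finset.mem_filter.mp hjstarS).1
  have hjstar_deg : (F.coeff jstar).totalDegree = d := (Finset.mem_filter.mp hjstarS).2
  set hpol : MvPolynomial (Fin r) k := homogeneousComponent d (F.coeff jstar) with hhpol
  set T : ℕ := F.natDegree with hT
  have hcoeffj : F.coeff jstar ≠ 0 := Polynomial.mem_support_iff.mp hjstar_supp
  -- hpol ≠ 0
  have hhne : hpol ≠ 0 := by
    obtain ⟨a, ha, hadeg⟩ : ∃ a ∈ (F.coeff jstar).support, (a.sum fun _ e => e) = d := by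
      obtain ⟨a, ha, hae⟩ := Finset.exists_mem_eq_sup (F.coeff jstar).support
        (by rwa [MvPolynomial.support_nonempty]) (fun a => a.sum fun _ e => e)
      exact ⟨a, ha, by rw [← hae, ← hjstar_deg]; rfl⟩
    intro h0
    have hcc := MvPolynomial.coeff_homogeneousComponent (σ := Fin r) (R := k)
      (n := d) (φ := F.coeff jstar) a
    rw [if_pos (by simpa [Finsupp.degree_apply, Finsupp.sum] using hadeg), ← hhpol, h0] at hcc
    exact MvPolynomial.mem_support_iff.mp ha hcc.symm
  have hcases : ∀ j ∈ F.support,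
      ((F.coeff j).totalDegree = d ∧ j ≤ jstar) ∨ ((F.coeff j).totalDegree < d) := by
    intro j hj
    by_cases hdd : (F.coeff j).totalDegree = d
    · exact Or.inl ⟨hdd, S.le_max' j (Finset.mem_filter.mpr ⟨hj, hdd⟩)⟩
    · exact Or.inr (lt_of_le_of_ne (hd ▸ Finset.le_sup (f := fun j => (F.coeff j).totalDegree) hj) hdd)
  have hjT : ∀ j ∈ F.support, j ≤ T := fun j hj => Polynomial.le_natDegree_of_mem_supp j hj
  clear_value d jstar T
  refine ⟨hpol, T + 1, hhne, by omega, ?_⟩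
  intro s hs K _ _ g hg
  set N : ℕ := s * (m + 1) with hN
  have hN1 : 1 ≤ N := by
    have : 1 ≤ s := by omega
    calc 1 ≤ s := this
      _ ≤ s * (m + 1) := Nat.le_mul_of_pos_right s (by omega)
  have hTN : T < N := by
    have : s ≤ s * (m + 1) := Nat.le_mul_of_pos_right s (by omega)
    omega
  clear_value N
  set fg : MvPolynomial (Option (Fin r)) K :=
    (MvPolynomial.aeval
      (fun o : Option (Fin r) =>
        o.elim (MvPolynomial.X none)
          (fun i => MvPolynomial.X (some i) +
            MvPolynomial.X none ^ N * MvPolynomial.C (g i)))) f with hfg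
  set Fg : Polynomial (MvPolynomial (Fin r) K) :=
    ∑ j ∈ F.support, (psi k g N) (F.coeff j) * Polynomial.X ^ j with hFgdef
  have hlamedge : optionEquivLeft K (Fin r) fg = Fg := lambda_eq g N f
  set D : ℕ := jstar + N * d with hD
  have hDsub : D - jstar = N * d := by rw [hD]; exact Nat.add_sub_cancel_left _ _
  clear_value D
  have hjD : ∀ j ∈ F.support, j ≤ D := by
    intro j hj
    rcases hcases j hj with ⟨_, hjj⟩ | hlt
    · rw [hD]; exact le_trans hjj (Nat.le_add_right _ _)
    · have h1 : 1 ≤ d := hlt.trans_le' (by omega)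
      have h2 : N ≤ N * d := Nat.le_mul_of_pos_right N (by omega)
      have h3 := hjT j hj
      linarith
  have hA : Fg.natDegree ≤ D := by
    rw [hFgdef]
    refine Polynomial.natDegree_sum_le_of_forall_le _ _ fun j hj => ?_
    refine (Polynomial.natDegree_mul_le).trans ?_
    have h1 : ((psi k g N) (F.coeff j)).natDegree ≤ N * (F.coeff j).totalDegree :=
      natDegree_psi_le g N (F.coeff j)
    have h2 : (Polynomial.X ^ j : Polynomial (MvPolynomial (Fin r) K)).natDegree ≤ j :=
      le_of_eq (Polynomial.natDegree_X_pow j)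
    refine le_trans (add_le_add h1 h2) ?_
    rcases hcases j hj with ⟨hdd, hjj⟩ | hlt
    · rw [hdd]; linarith
    · have h3 : N * ((F.coeff j).totalDegree + 1) ≤ N * d := Nat.mul_le_mul_left N hlt
      have h4 : N * ((F.coeff j).totalDegree + 1) = N * (F.coeff j).totalDegree + N := by ring
      have h5 := hjT j hj
      linarith
  have hB : Fg.coeff D = MvPolynomial.C ((MvPolynomial.aeval g) hpol) := by
    rw [hFgdef, Polynomial.finset_sum_coeff]
    rw [Finset.sum_eq_single jstar]
    · rw [Polynomial.coeff_mul_X_pow', if_pos (hjD jstar hjstar_supp)]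
      rw [hDsub, coeff_psi g N hN1 _ d (le_of_eq hjstar_deg), hhpol]
    · intro j hj hne
      rw [Polynomial.coeff_mul_X_pow', if_pos (hjD j hj)]
      refine Polynomial.coeff_eq_zero_of_natDegree_lt ?_
      have h1 : ((psi k g N) (F.coeff j)).natDegree ≤ N * (F.coeff j).totalDegree :=
        natDegree_psi_le g N (F.coeff j)
      have hlt2 : N * (F.coeff j).totalDegree + j < D := by
        rcases hcases j hj with ⟨hdd, hjj⟩ | hlt
        · rw [hdd]
          have : j < jstar := lt_of_le_of_ne hjj hne
          linarith
        · have h3 : N * ((F.coeff j).totalDegree + 1) ≤ N * d := Nat.mul_le_mul_left N hlt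
          have h4 : N * ((F.coeff j).totalDegree + 1) = N * (F.coeff j).totalDegree + N := by
            ring
          have h5 := hjT j hj
          linarith
      have := hjD j hj
      refine Nat.lt_sub_of_add_lt ?_
      linarith
    · intro hns; exact absurd hjstar_supp hns
  have hcne : MvPolynomial.C ((MvPolynomial.aeval g) hpol) ≠ (0 : MvPolynomial (Fin r) K) :=
    MvPolynomial.C_ne_zero.mpr hg
  have hFgD : Fg.natDegree = D :=
    le_antisymm hA (Polynomial.le_natDegree_of_ne_zero (by rw [hB]; exact hcne))
  have hlead : Fg.leadingCoeff = MvPolynomial.C ((MvPolynomial.aeval g) hpol) := by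
    rw [Polynomial.leadingCoeff, hFgD, hB]
  -- D ≥ 1
  have hD1 : 1 ≤ D := by
    by_contra h0
    have hD0 : D = 0 := by omega
    have hsum0 : jstar + N * d = 0 := hD.symm.trans hD0
    have hjs0 : jstar = 0 := by
      rcases Nat.add_eq_zero.mp hsum0 with ⟨h1, _⟩; exact h1
    have hNd0 : N * d = 0 := by
      rcases Nat.add_eq_zero.mp hsum0 with ⟨_, h1⟩; exact h1
    have hd0 : d = 0 := by
      rcases Nat.mul_eq_zero.mp hNd0 with h1 | h1
      · omega
      · exact h1
    have hsupp0 : ∀ j ∈ F.support, j = 0 := by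
      intro j hj
      rcases hcases j hj with ⟨_, hjj⟩ | hlt
      · omega
      · omega
    have hFdeg : F.natDegree = 0 := by
      by_contra hFd
      exact hFd (hsupp0 _ (Polynomial.natDegree_mem_support_of_nonzero hF0))
    have hFC : F = Polynomial.C (F.coeff 0) :=
      Polynomial.eq_C_of_natDegree_le_zero (le_of_eq hFdeg)
    have htd : (F.coeff 0).totalDegree = 0 := by
      have h' := hjstar_deg
      rw [hjs0] at h'
      rw [h']; exact hd0
    have hfc : f = MvPolynomial.C (MvPolynomial.coeff 0 (F.coeff 0)) := by
      apply (optionEquivLeft k (Fin r)).injective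
      rw [← hF, optionEquivLeft_C, ← eq_C_of_totalDegree_eq_zero htd]
      exact hFC
    have hcne0 : MvPolynomial.coeff 0 (F.coeff 0) ≠ 0 := by
      intro hh0
      exact hf0 (by rw [hfc, hh0, map_zero])
    exact hirr.not_isUnit (by
      rw [hfc]
      exact (isUnit_iff_ne_zero.mpr hcne0).map
        (MvPolynomial.C : k →+* MvPolynomial (Option (Fin r)) k))
  -- the monic polynomial P
  set c : K := (MvPolynomial.aeval g) hpol with hc
  set w : Polynomial (MvPolynomial (Fin r) K) := Polynomial.C (MvPolynomial.C c⁻¹) with hw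
  set P : Polynomial (MvPolynomial (Fin r) K) := w * Fg with hP
  have hwne : (MvPolynomial.C (c⁻¹ : K) : MvPolynomial (Fin r) K) ≠ 0 :=
    MvPolynomial.C_ne_zero.mpr (inv_ne_zero hg)
  have hwu : IsUnit w := by
    rw [hw]
    exact (((isUnit_iff_ne_zero.mpr (inv_ne_zero hg)).map
      (MvPolynomial.C : K →+* MvPolynomial (Fin r) K)).map
      (Polynomial.C : MvPolynomial (Fin r) K →+* Polynomial (MvPolynomial (Fin r) K)))
  have hPmonic : P.Monic := by
    show P.leadingCoeff = 1
    rw [hP, Polynomial.leadingCoeff_mul, hw, Polynomial.leadingCoeff_C, hlead,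
      ← map_mul, inv_mul_cancel₀ hg, map_one]
  have hPdeg : P.natDegree = D := by
    rw [hP, hw, Polynomial.natDegree_C_mul hwne, hFgD]
  have hdegP : P.degree ≠ 0 := by
    rw [Polynomial.degree_eq_natDegree hPmonic.ne_zero, hPdeg]
    exact_mod_cast (by omega : D ≠ 0)
  -- ideals and quotients
  set I : Ideal (MvPolynomial (Option (Fin r)) K) := Ideal.span {fg} with hI
  set J : Ideal (Polynomial (MvPolynomial (Fin r) K)) := Ideal.span {P} with hJ
  set e' : MvPolynomial (Option (Fin r)) K ≃+* Polynomial (MvPolynomial (Fin r) K) :=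
    (optionEquivLeft K (Fin r)).toRingEquiv with he'
  have hmap : J = I.map (e' : MvPolynomial (Option (Fin r)) K →+* _) := by
    rw [hI, Ideal.map_span, Set.image_singleton]
    have h1 : (e' : MvPolynomial (Option (Fin r)) K →+* _) fg = Fg := hlamedge
    rw [h1, hJ]
    refine (Ideal.span_singleton_eq_span_singleton.mpr ?_).symm
    exact ⟨hwu.unit, by rw [IsUnit.unit_spec, hP, mul_comm]⟩
  set θ := Ideal.quotientEquiv I J e' hmap with hθ
  have hrename : ∀ a : MvPolynomial (Fin r) K,
      (optionEquivLeft K (Fin r)) (rename some a) = Polynomial.C a := by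
    intro a
    induction a using MvPolynomial.induction_on with
    | C c' => rw [rename_C, optionEquivLeft_C]
    | add p q hp hq => rw [map_add, map_add, hp, hq, map_add]
    | mul_X p i hp => rw [map_mul, map_mul, hp, rename_X, optionEquivLeft_X_some, map_mul]
  have hcomp : ∀ a : MvPolynomial (Fin r) K,
      θ ((Ideal.Quotient.mk I) (rename (some : Fin r → Option (Fin r)) a))
        = (Ideal.Quotient.mk J) (Polynomial.C a) := by
    intro a
    rw [hθ, Ideal.quotientEquiv_mk]
    congr 1
    exact hrename a
  have hofP : ∀ a : MvPolynomial (Fin r) K,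
      AdjoinRoot.of P a = (Ideal.Quotient.mk J) (Polynomial.C a) := fun a => rfl
  have hinj : Function.Injective (AdjoinRoot.of P) :=
    AdjoinRoot.of.injective_of_degree_ne_zero hdegP
  constructor
  · -- injectivity
    intro x y hxy
    apply hinj
    rw [hofP, hofP, ← hcomp, ← hcomp]
    exact congrArg θ hxy
  · -- finiteness
    have hfin0 : Module.Finite (MvPolynomial (Fin r) K) (AdjoinRoot P) :=
      (AdjoinRoot.powerBasis' hPmonic).finite
    have hfin : (AdjoinRoot.of P).Finite := by
      rw [← AdjoinRoot.algebraMap_eq]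
      exact finite_algebraMap hfin0
    have hfinJ : @RingHom.Finite (MvPolynomial (Fin r) K)
        (Polynomial (MvPolynomial (Fin r) K) ⧸ J) _ _ ((Ideal.Quotient.mk J).comp
        (Polynomial.C (R := MvPolynomial (Fin r) K))) := by
      have e : (Ideal.Quotient.mk J).comp (Polynomial.C (R := MvPolynomial (Fin r) K))
          = AdjoinRoot.of P := RingHom.ext fun a => (hofP a).symm
      rw [e]
      exact hfin
    have hρ : (Ideal.Quotient.mk I).comp
          (MvPolynomial.rename (some : Fin r → Option (Fin r))).toRingHom
        = (θ.symm.toRingHom).comp ((Ideal.Quotient.mk J).comp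
            (Polynomial.C : MvPolynomial (Fin r) K →+* Polynomial (MvPolynomial (Fin r) K))) := by
      refine RingHom.ext fun a => ?_
      rw [RingHom.comp_apply, RingHom.comp_apply, RingHom.comp_apply]
      show (Ideal.Quotient.mk I) (rename some a) = θ.symm ((Ideal.Quotient.mk J) (Polynomial.C a))
      rw [← hcomp, RingEquiv.symm_apply_apply]
    rw [hρ]
    exact RingHom.Finite.comp
      (RingHom.Finite.of_surjective θ.symm.toRingHom (by exact θ.symm.surjective)) hfinJ
end
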